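/- If a quantum channel E on a finite-dimensional system is nonunital (E(I) ≠ I), then E is not repeatable with a finite-dimensional memory: there is no unitary U on H_M ⊗ H_S with dim H_M < ∞ and memory state ξ such that the induced channel equals E on every use for all input sequences. -/

import Mathlib

open Matrix Kronecker BigOperators
open scoped ComplexOrder

noncomputable def vnEntropy {n : Type*} [Fintype n] [DecidableEq n] (ρ : Matrix n n ℂ) : ℝ :=
  if h : ρ.IsHermitian then ∑ i, Real.negMulLog (h.eigenvalues i) else 0

def IsDensity {n : Type*} [Fintype n] [DecidableEq n] (ρ : Matrix n n ℂ) : Prop :=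
  ρ.PosSemidef ∧ ρ.trace = 1

def IsUnitary {n : Type*} [Fintype n] [DecidableEq n] (U : Matrix n n ℂ) : Prop :=
  U * Uᴴ = 1 ∧ Uᴴ * U = 1

noncomputable def ptraceMem {μ s : Type*} [Fintype μ] (X : Matrix (μ × s) (μ × s) ℂ) : Matrix s s ℂ :=
  Matrix.of fun i j => ∑ a, X (a, i) (a, j)

noncomputable def ptraceSys {μ s : Type*} [Fintype s] (X : Matrix (μ × s) (μ × s) ℂ) : Matrix μ μ ℂ :=
  Matrix.of fun a b => ∑ i, X (a, i) (b, i)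

noncomputable def inducedChan {μ s : Type*} [Fintype μ] [Fintype s]
    (U : Matrix (μ × s) (μ × s) ℂ) (ξ : Matrix μ μ ℂ) (ρ : Matrix s s ℂ) : Matrix s s ℂ :=
  ptraceMem (U * (ξ ⊗ₖ ρ) * Uᴴ)

noncomputable def memUpdate {μ s : Type*} [Fintype μ] [Fintype s]
    (U : Matrix (μ × s) (μ × s) ℂ) (ξ : Matrix μ μ ℂ) (ρ : Matrix s s ℂ) : Matrix μ μ ℂ :=
  ptraceSys (U * (ξ ⊗ₖ ρ) * Uᴴ)

def ctrlU {μ s : Type*} [DecidableEq μ] (Uf : μ → Matrix s s ℂ) : Matrix (μ × s) (μ × s) ℂ :=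
  Matrix.of fun p q => if p.1 = q.1 then Uf p.1 p.2 q.2 else 0

def extendMap {n m : Type*} [Fintype n] [DecidableEq n]
    (E : Matrix n n ℂ →ₗ[ℂ] Matrix n n ℂ) (ρ : Matrix (n × m) (n × m) ℂ) :
    Matrix (n × m) (n × m) ℂ :=
  Matrix.of fun p q => E (Matrix.of fun i j => ρ (i, p.2) (j, q.2)) p.1 q.1

def IsCP {n : Type*} [Fintype n] [DecidableEq n]
    (E : Matrix n n ℂ →ₗ[ℂ] Matrix n n ℂ) : Prop :=
  ∀ (k : ℕ) (ρ : Matrix (n × Fin k) (n × Fin k) ℂ), ρ.PosSemidef → (extendMap E ρ).PosSemidef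

def IsTP {n : Type*} [Fintype n] [DecidableEq n]
    (E : Matrix n n ℂ →ₗ[ℂ] Matrix n n ℂ) : Prop :=
  ∀ ρ, (E ρ).trace = ρ.trace

noncomputable def mlog {n : Type*} [Fintype n] [DecidableEq n] (ρ : Matrix n n ℂ) :
    Matrix n n ℂ :=
  if h : ρ.IsHermitian then
    (h.eigenvectorUnitary : Matrix n n ℂ) *
      Matrix.diagonal (fun i => (Real.log (h.eigenvalues i) : ℂ)) *
      (h.eigenvectorUnitary : Matrix n n ℂ)ᴴ
  else 0

noncomputable def relEntropy {n : Type*} [Fintype n] [DecidableEq n]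
    (ρ ω : Matrix n n ℂ) : ℝ :=
  ((ρ * (mlog ρ - mlog ω)).trace).re

structure RepeatableImpl {s : Type*} [Fintype s] [DecidableEq s]
    (E : Matrix s s ℂ → Matrix s s ℂ) where
  μ : Type
  [finμ : Fintype μ]
  [decμ : DecidableEq μ]
  U : Matrix (μ × s) (μ × s) ℂ
  ξ : Matrix μ μ ℂ
  unitary : IsUnitary U
  density : IsDensity ξ
  repeats : ∀ (ρs : ℕ → Matrix s s ℂ), (∀ k, IsDensity (ρs k)) →
    ∀ (ξseq : ℕ → Matrix μ μ ℂ), ξseq 0 = ξ →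
      (∀ k, ξseq (k + 1) = memUpdate U (ξseq k) (ρs k)) →
      ∀ n (ρ : Matrix s s ℂ), IsDensity ρ → inducedChan U (ξseq n) ρ = E ρ

open Complex

noncomputable def fnsq {n m : Type*} [Fintype n] [Fintype m] (X : Matrix n m ℂ) : ℝ :=
  ∑ a, ∑ b, Complex.normSq (X a b)

lemma fnsq_nonneg {n m : Type*} [Fintype n] [Fintype m] (X : Matrix n m ℂ) : 0 ≤ fnsq X := by
  apply Finset.sum_nonneg; intro a _; apply Finset.sum_nonneg; intro b _; exact normSq_nonneg _

lemma trace_mul_conjTranspose {n : Type*} [Fintype n] (X : Matrix n n ℂ) :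
    (X * Xᴴ).trace = (fnsq X : ℂ) := by
  simp only [Matrix.trace, Matrix.diag, Matrix.mul_apply, Matrix.conjTranspose_apply, fnsq]
  push_cast
  congr 1; ext a; congr 1; ext b
  rw [mul_comm, Complex.normSq_eq_conj_mul_self]
  rfl

lemma fnsq_unitary_conj {n : Type*} [Fintype n] [DecidableEq n] {U : Matrix n n ℂ}
    (hU : Uᴴ * U = 1) (X : Matrix n n ℂ) : fnsq (U * X * Uᴴ) = fnsq X := by
  have key : (U * X * Uᴴ) * (U * X * Uᴴ)ᴴ = U * ((X * Xᴴ) * Uᴴ) := by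
    simp only [Matrix.conjTranspose_mul, Matrix.conjTranspose_conjTranspose, Matrix.mul_assoc]
    rw [← Matrix.mul_assoc Uᴴ U, hU, Matrix.one_mul]
  have h : ((U * X * Uᴴ) * (U * X * Uᴴ)ᴴ).trace = ((X * Xᴴ).trace) := by
    rw [key, Matrix.trace_mul_comm U, Matrix.mul_assoc, hU, Matrix.mul_one]
  have h1 := trace_mul_conjTranspose (U * X * Uᴴ)
  have h2 := trace_mul_conjTranspose X
  rw [h1, h2] at h
  exact_mod_cast h

lemma fnsq_kronecker {n m : Type*} [Fintype n] [Fintype m] (ξ : Matrix n n ℂ) (ρ : Matrix m m ℂ) :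
    fnsq (ξ ⊗ₖ ρ) = fnsq ξ * fnsq ρ := by
  calc fnsq (ξ ⊗ₖ ρ) = ∑ a, ∑ b, ∑ i, ∑ j, normSq (ξ a b) * normSq (ρ i j) := by
        simp only [fnsq, Fintype.sum_prod_type, Matrix.kroneckerMap_apply, Complex.normSq_mul]
        refine Finset.sum_congr rfl fun a _ => ?_
        rw [Finset.sum_comm]
    _ = fnsq ξ * fnsq ρ := by
        simp only [fnsq, ← Finset.mul_sum, ← Finset.sum_mul]

lemma normSq_sum_le {ι : Type*} [Fintype ι] (z : ι → ℂ) :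
    normSq (∑ i, z i) ≤ (Fintype.card ι : ℝ) * ∑ i, normSq (z i) := by
  have h1 : ‖∑ i, z i‖ ≤ ∑ i, ‖z i‖ := by
    simpa using norm_sum_le Finset.univ z
  have h2 : (∑ i, ‖z i‖) ^ 2 ≤ (Fintype.card ι : ℝ) * ∑ i, normSq (z i) := by
    have := Finset.sum_mul_sq_le_sq_mul_sq Finset.univ (fun _ : ι => (1 : ℝ))
      (fun i => ‖z i‖)
    simpa [Finset.card_univ, Complex.sq_norm] using this
  calc normSq (∑ i, z i) = ‖∑ i, z i‖ ^ 2 := (Complex.sq_norm _).symm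
    _ ≤ (∑ i, ‖z i‖) ^ 2 := by
        apply pow_le_pow_left₀ (norm_nonneg _) h1
    _ ≤ _ := h2

lemma sum_normSq_identity {ι : Type*} [Fintype ι] (z : ι → ℂ) :
    (Fintype.card ι : ℝ) * ∑ i, normSq (z i) =
      normSq (∑ i, z i) + (1/2) * ∑ i, ∑ j, normSq (z i - z j) := by
  have h2 : ∑ i, ∑ j, (z i * (starRingEnd ℂ) (z j)).re = normSq (∑ i, z i) := by
    have e : (∑ i, z i) * (starRingEnd ℂ) (∑ j, z j) = ∑ i, ∑ j, z i * (starRingEnd ℂ) (z j) := by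
      rw [map_sum, Finset.sum_mul_sum]
    have := congrArg Complex.re e
    rw [Complex.mul_conj] at this
    simp only [Complex.re_sum] at this
    simp only [Complex.ofReal_re] at this
    exact this.symm
  have expand : ∑ i, ∑ j, normSq (z i - z j) =
      (Fintype.card ι : ℝ) * (∑ i, normSq (z i)) + (Fintype.card ι : ℝ) * (∑ i, normSq (z i))
        - 2 * normSq (∑ i, z i) := by
    simp only [Complex.normSq_sub]
    rw [← h2]
    simp only [Finset.sum_sub_distrib, Finset.sum_add_distrib, Finset.sum_const,
      Finset.card_univ, nsmul_eq_mul, ← Finset.mul_sum, ← Finset.sum_mul]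
  rw [expand]; ring

lemma sum_swap3 {α β γ : Type*} [Fintype α] [Fintype β] [Fintype γ] (g : α → β → γ → ℝ) :
    ∑ a, ∑ b, ∑ i, g a b i = ∑ i, ∑ a, ∑ b, g a b i := by
  calc ∑ a, ∑ b, ∑ i, g a b i = ∑ a, ∑ i, ∑ b, g a b i :=
        Finset.sum_congr rfl fun a _ => by rw [Finset.sum_comm]
    _ = ∑ i, ∑ a, ∑ b, g a b i := by rw [Finset.sum_comm]

lemma step_ineq {μ s : Type*} [Fintype μ] [Fintype s] [DecidableEq s] [Nonempty μ] [Nonempty s]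
    (σ : Matrix (μ × s) (μ × s) ℂ) :
    fnsq (ptraceSys σ) +
      ((∑ i, ∑ j, if i = j then (0:ℝ) else Complex.normSq (ptraceMem σ i j)) +
        (1/2) * ∑ i, ∑ j, Complex.normSq (ptraceMem σ i i - ptraceMem σ j j))
        / (Fintype.card μ : ℝ)
      ≤ (Fintype.card s : ℝ) * fnsq σ := by
  have hm : (0:ℝ) < (Fintype.card μ : ℝ) := by exact_mod_cast Fintype.card_pos
  have hd1 : (1:ℝ) ≤ (Fintype.card s : ℝ) := by exact_mod_cast Fintype.card_pos
  set m : ℝ := (Fintype.card μ : ℝ)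
  set d : ℝ := (Fintype.card s : ℝ)
  set S : s → s → ℝ := fun i j => ∑ a, ∑ b, Complex.normSq (σ (a,i) (b,j)) with hSdef
  set T : s → s → ℝ := fun i j => ∑ a, ∑ b, Complex.normSq (σ (a,i) (b,i) - σ (a,j) (b,j))
    with hTdef
  have hSnn : ∀ i j, 0 ≤ S i j := fun i j =>
    Finset.sum_nonneg fun a _ => Finset.sum_nonneg fun b _ => normSq_nonneg _
  have hTnn : ∀ i j, 0 ≤ T i j := fun i j =>
    Finset.sum_nonneg fun a _ => Finset.sum_nonneg fun b _ => normSq_nonneg _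
  have hfs : fnsq σ = ∑ i, ∑ j, S i j := by
    simp only [fnsq, Fintype.sum_prod_type, hSdef]
    rw [Finset.sum_comm]
    refine Finset.sum_congr rfl fun i _ => ?_
    exact sum_swap3 (fun a b j => Complex.normSq (σ (a,i) (b,j)))
  have hps : fnsq (ptraceSys σ) = d * (∑ i, S i i) - (1/2) * ∑ i, ∑ j, T i j := by
    have h1 : fnsq (ptraceSys σ) = ∑ a, ∑ b,
        (d * (∑ i, Complex.normSq (σ (a,i) (b,i)))
          - (1/2) * ∑ i, ∑ j, Complex.normSq (σ (a,i) (b,i) - σ (a,j) (b,j))) := by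
      simp only [fnsq, ptraceSys, Matrix.of_apply]
      refine Finset.sum_congr rfl fun a _ => Finset.sum_congr rfl fun b _ => ?_
      have h := sum_normSq_identity (fun i => σ (a,i) (b,i))
      linarith
    rw [h1]
    simp only [Finset.sum_sub_distrib, ← Finset.mul_sum]
    have e1 : ∑ a, ∑ b, ∑ i, Complex.normSq (σ (a,i) (b,i)) = ∑ i, S i i := by
      rw [sum_swap3 (fun a b i => Complex.normSq (σ (a,i) (b,i)))]
    have e2 : ∑ a, ∑ b, ∑ i, ∑ j, Complex.normSq (σ (a,i) (b,i) - σ (a,j) (b,j))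
        = ∑ i, ∑ j, T i j := by
      rw [sum_swap3 (fun a b i => ∑ j, Complex.normSq (σ (a,i) (b,i) - σ (a,j) (b,j)))]
      refine Finset.sum_congr rfl fun i _ => ?_
      exact sum_swap3 (fun a b j => Complex.normSq (σ (a,i) (b,i) - σ (a,j) (b,j)))
    rw [e1, e2]
  have hm0 : (0:ℝ) ≤ m := le_of_lt hm
  have hPB : ∀ i j, Complex.normSq (ptraceMem σ i j) ≤ m * S i j := by
    intro i j
    have h1 : ptraceMem σ i j = ∑ a, σ (a,i) (a,j) := rfl
    rw [h1]
    calc normSq (∑ a, σ (a,i) (a,j)) ≤ m * ∑ a, normSq (σ (a,i) (a,j)) := normSq_sum_le _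
      _ ≤ m * S i j := by
          refine mul_le_mul_of_nonneg_left ?_ hm0
          refine Finset.sum_le_sum fun a _ => ?_
          exact Finset.single_le_sum (f := fun b => Complex.normSq (σ (a,i) (b,j)))
            (fun b _ => Complex.normSq_nonneg _) (Finset.mem_univ a)
  have hTB : ∀ i j, Complex.normSq (ptraceMem σ i i - ptraceMem σ j j) ≤ m * T i j := by
    intro i j
    have h1 : ptraceMem σ i i - ptraceMem σ j j = ∑ a, (σ (a,i) (a,i) - σ (a,j) (a,j)) := by
      rw [Finset.sum_sub_distrib]; rfl
    rw [h1]
    calc normSq (∑ a, (σ (a,i) (a,i) - σ (a,j) (a,j)))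
        ≤ m * ∑ a, normSq (σ (a,i) (a,i) - σ (a,j) (a,j)) := normSq_sum_le _
      _ ≤ m * T i j := by
          refine mul_le_mul_of_nonneg_left ?_ hm0
          refine Finset.sum_le_sum fun a _ => ?_
          exact Finset.single_le_sum
            (f := fun b => Complex.normSq (σ (a,i) (b,i) - σ (a,j) (b,j)))
            (fun b _ => Complex.normSq_nonneg _) (Finset.mem_univ a)
  have hsplit : ∑ i, ∑ j, S i j = (∑ i, S i i) + ∑ i, ∑ j, (if i = j then 0 else S i j) := by
    have key : ∀ i, ∑ j, S i j = S i i + ∑ j, (if i = j then 0 else S i j) := by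
      intro i
      have hdiag : (∑ j, if i = j then S i j else 0) = S i i := by
        rw [Finset.sum_ite_eq]; simp
      calc ∑ j, S i j
          = ∑ j, ((if i = j then S i j else 0) + (if i = j then 0 else S i j)) := by
            refine Finset.sum_congr rfl fun j _ => ?_; split_ifs <;> ring
        _ = S i i + ∑ j, (if i = j then 0 else S i j) := by
            rw [Finset.sum_add_distrib, hdiag]
    calc ∑ i, ∑ j, S i j = ∑ i, (S i i + ∑ j, (if i = j then 0 else S i j)) :=
          Finset.sum_congr rfl fun i _ => key i
      _ = _ := Finset.sum_add_distrib
  have hoffnn : 0 ≤ ∑ i, ∑ j, (if i = j then (0:ℝ) else S i j) := by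
    refine Finset.sum_nonneg fun i _ => Finset.sum_nonneg fun j _ => ?_
    split_ifs
    · exact le_refl 0
    · exact hSnn i j
  have hPsum : (∑ i, ∑ j, if i = j then (0:ℝ) else Complex.normSq (ptraceMem σ i j))
      ≤ m * ∑ i, ∑ j, (if i = j then 0 else S i j) := by
    rw [Finset.mul_sum]
    refine Finset.sum_le_sum fun i _ => ?_
    rw [Finset.mul_sum]
    refine Finset.sum_le_sum fun j _ => ?_
    split_ifs
    · simp
    · exact hPB i j
  have hQsum : (∑ i, ∑ j, Complex.normSq (ptraceMem σ i i - ptraceMem σ j j))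
      ≤ m * ∑ i, ∑ j, T i j := by
    rw [Finset.mul_sum]
    refine Finset.sum_le_sum fun i _ => ?_
    rw [Finset.mul_sum]
    exact Finset.sum_le_sum fun j _ => hTB i j
  have hTTnn : 0 ≤ ∑ i, ∑ j, T i j :=
    Finset.sum_nonneg fun i _ => Finset.sum_nonneg fun j _ => hTnn i j
  rw [hps, hfs, hsplit]
  have h1 : ((∑ i, ∑ j, if i = j then (0:ℝ) else Complex.normSq (ptraceMem σ i j)) +
        (1/2) * ∑ i, ∑ j, Complex.normSq (ptraceMem σ i i - ptraceMem σ j j)) / m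
      ≤ (∑ i, ∑ j, (if i = j then 0 else S i j)) + (1/2) * ∑ i, ∑ j, T i j := by
    rw [div_le_iff₀ hm]
    nlinarith [hPsum, hQsum]
  have h2 : (∑ i, ∑ j, (if i = j then 0 else S i j))
      ≤ d * ∑ i, ∑ j, (if i = j then 0 else S i j) := le_mul_of_one_le_left hoffnn hd1
  nlinarith [h1, h2, hTTnn]

lemma fnsq_smul_one {s : Type*} [Fintype s] [DecidableEq s] [Nonempty s] :
    fnsq (((Fintype.card s : ℂ))⁻¹ • (1 : Matrix s s ℂ)) = ((Fintype.card s : ℝ))⁻¹ := by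
  have hd : ((Fintype.card s : ℝ)) ≠ 0 := Nat.cast_ne_zero.mpr Fintype.card_pos.ne'
  have h1 : ∀ i j : s, Complex.normSq ((((Fintype.card s : ℂ))⁻¹ • (1 : Matrix s s ℂ)) i j)
      = if i = j then ((Fintype.card s : ℝ) * (Fintype.card s : ℝ))⁻¹ else 0 := by
    intro i j
    rw [Matrix.smul_apply, Matrix.one_apply, smul_eq_mul]
    split_ifs
    · rw [mul_one, Complex.normSq_inv, Complex.normSq_natCast]
    · simp
  simp only [fnsq, h1]
  simp only [Finset.sum_ite_eq, Finset.mem_univ, if_true]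
  rw [Finset.sum_const, Finset.card_univ, nsmul_eq_mul]
  field_simp

theorem nonunital_not_repeatable
    {s : Type*} [Fintype s] [DecidableEq s] [Nonempty s]
    (E : Matrix s s ℂ →ₗ[ℂ] Matrix s s ℂ)
    (hCP : IsCP E) (hTP : IsTP E) (hnonunital : E 1 ≠ 1) :
    ¬ Nonempty (RepeatableImpl (fun ρ => E ρ)) := by
  rintro ⟨impl⟩
  letI : Fintype impl.μ := impl.finμ
  letI : DecidableEq impl.μ := impl.decμ
  obtain ⟨hU1, hU2⟩ := impl.unitary
  obtain ⟨hξP, hξtr⟩ := impl.density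
  haveI hμne : Nonempty impl.μ := by
    by_contra h
    rw [not_nonempty_iff] at h
    simp [Matrix.trace] at hξtr
  have hd0 : 0 < Fintype.card s := Fintype.card_pos
  have hdC : ((Fintype.card s : ℂ)) ≠ 0 := Nat.cast_ne_zero.mpr hd0.ne'
  have hdR : ((Fintype.card s : ℝ)) ≠ 0 := Nat.cast_ne_zero.mpr hd0.ne'
  set ρm : Matrix s s ℂ := ((Fintype.card s : ℂ))⁻¹ • 1 with hρm
  have hρdens : IsDensity ρm := by
    constructor
    · rw [hρm, Matrix.smul_one_eq_diagonal]
      apply Matrix.PosSemidef.diagonal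
      intro i
      show (0:ℂ) ≤ ((Fintype.card s : ℂ))⁻¹
      rw [show ((Fintype.card s : ℂ))⁻¹ = (((Fintype.card s : ℝ)⁻¹ : ℝ) : ℂ) by push_cast; ring,
        Complex.zero_le_real]
      positivity
    · rw [hρm, Matrix.trace_smul, Matrix.trace_one]
      simp only [smul_eq_mul]
      exact inv_mul_cancel₀ hdC
  set f : ℕ → Matrix impl.μ impl.μ ℂ :=
    fun n => Nat.rec impl.ξ (fun _ x => memUpdate impl.U x ρm) n with hfdef
  have hf0 : f 0 = impl.ξ := rfl
  have hfs : ∀ k, f (k+1) = memUpdate impl.U (f k) ρm := fun k => rfl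
  have hA : ∀ n, inducedChan impl.U (f n) ρm = E ρm :=
    fun n => impl.repeats (fun _ => ρm) (fun _ => hρdens) f hf0 hfs n ρm hρdens
  set A : Matrix s s ℂ := E ρm with hAdef
  have htrA : A.trace = 1 := by rw [hAdef, hTP]; exact hρdens.2
  have hAne : A ≠ ρm := by
    intro h
    apply hnonunital
    have h1 : (1 : Matrix s s ℂ) = (Fintype.card s : ℂ) • ρm := by
      rw [hρm, smul_smul, mul_inv_cancel₀ hdC, one_smul]
    calc E 1 = E ((Fintype.card s : ℂ) • ρm) := by rw [← h1]
      _ = (Fintype.card s : ℂ) • E ρm := map_smul E _ _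
      _ = (Fintype.card s : ℂ) • ρm := by rw [← hAdef, h]
      _ = 1 := h1.symm
  have hmne : (0:ℝ) < (Fintype.card impl.μ : ℝ) := by exact_mod_cast Fintype.card_pos
  set P : ℝ := ∑ i, ∑ j, if i = j then (0:ℝ) else Complex.normSq (A i j) with hPdef
  set Q : ℝ := ∑ i, ∑ j, Complex.normSq (A i i - A j j) with hQdef
  have hPnn : 0 ≤ P := by
    refine Finset.sum_nonneg fun i _ => Finset.sum_nonneg fun j _ => ?_
    split_ifs
    · exact le_refl 0
    · exact normSq_nonneg _
  have hQnn : 0 ≤ Q :=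
    Finset.sum_nonneg fun i _ => Finset.sum_nonneg fun j _ => normSq_nonneg _
  have hnum : 0 < P + (1/2) * Q := by
    rcases (by linarith : (0:ℝ) ≤ P + (1/2) * Q).lt_or_eq with h | h
    · exact h
    exfalso
    have hP0 : P = 0 := by linarith
    have hQ0 : Q = 0 := by linarith
    have hoff : ∀ i j, i ≠ j → A i j = 0 := by
      intro i j hij
      have h1 := (Finset.sum_eq_zero_iff_of_nonneg
        (fun i _ => Finset.sum_nonneg fun j _ =>
          (by split_ifs; exacts [le_refl 0, normSq_nonneg _] :
            (0:ℝ) ≤ if i = j then 0 else normSq (A i j)))).mp (hPdef ▸ hP0) i (Finset.mem_univ i)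
      have h2 := (Finset.sum_eq_zero_iff_of_nonneg
        (fun j _ => (by split_ifs; exacts [le_refl 0, normSq_nonneg _] :
          (0:ℝ) ≤ if i = j then 0 else normSq (A i j)))).mp h1 j (Finset.mem_univ j)
      rw [if_neg hij] at h2
      exact normSq_eq_zero.mp h2
    have hdg : ∀ i j, A i i = A j j := by
      intro i j
      have h1 := (Finset.sum_eq_zero_iff_of_nonneg
        (fun i _ => Finset.sum_nonneg fun j _ => normSq_nonneg (A i i - A j j))).mp
        (hQdef ▸ hQ0) i (Finset.mem_univ i)
      have h2 := (Finset.sum_eq_zero_iff_of_nonneg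
        (fun j _ => normSq_nonneg (A i i - A j j))).mp h1 j (Finset.mem_univ j)
      have := normSq_eq_zero.mp h2
      linear_combination this
    obtain ⟨i0⟩ := (inferInstance : Nonempty s)
    have htr2 : A.trace = (Fintype.card s : ℂ) * A i0 i0 := by
      rw [Matrix.trace]
      calc ∑ i, A.diag i = ∑ _i : s, A i0 i0 :=
            Finset.sum_congr rfl fun i _ => hdg i i0
        _ = (Fintype.card s : ℂ) * A i0 i0 := by
            rw [Finset.sum_const, Finset.card_univ, nsmul_eq_mul]
    have hv : A i0 i0 = ((Fintype.card s : ℂ))⁻¹ := by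
      have h2 : (Fintype.card s : ℂ) * A i0 i0 = 1 := by rw [← htr2, htrA]
      field_simp at h2 ⊢
      linear_combination h2
    apply hAne
    ext i j
    by_cases hij : i = j
    · subst hij
      rw [hdg i i0, hv, hρm]
      simp [Matrix.smul_apply, Matrix.one_apply_eq]
    · rw [hoff i j hij, hρm]
      simp [Matrix.smul_apply, Matrix.one_apply_ne hij]
  set δ : ℝ := (P + (1/2) * Q) / (Fintype.card impl.μ : ℝ) with hδdef
  have hδpos : 0 < δ := div_pos hnum hmne
  have hfρ : fnsq ρm = ((Fintype.card s : ℝ))⁻¹ := fnsq_smul_one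
  have hdec : ∀ n, fnsq (f (n+1)) + δ ≤ fnsq (f n) := by
    intro n
    have h1 := step_ineq (impl.U * (f n ⊗ₖ ρm) * impl.Uᴴ)
    have h2 : ptraceMem (impl.U * (f n ⊗ₖ ρm) * impl.Uᴴ) = A := hA n
    have h3 : ptraceSys (impl.U * (f n ⊗ₖ ρm) * impl.Uᴴ) = f (n+1) := (hfs n).symm
    rw [h2, h3, fnsq_unitary_conj hU2, fnsq_kronecker, hfρ] at h1
    have h4 : (Fintype.card s : ℝ) * (fnsq (f n) * ((Fintype.card s : ℝ))⁻¹) = fnsq (f n) := by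
      field_simp
    rw [h4] at h1
    exact h1
  have hbound : ∀ n, fnsq (f n) ≤ fnsq impl.ξ - n * δ := by
    intro n
    induction n with
    | zero => simp [hf0]
    | succ k ih =>
      have := hdec k
      push_cast
      push_cast at ih
      linarith
  obtain ⟨n, hn⟩ := exists_nat_gt (fnsq impl.ξ / δ)
  have h1 := hbound n
  have h2 := fnsq_nonneg (f n)
  rw [div_lt_iff₀ hδpos] at hn
  linarith
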